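/- Let x̃ : [0,∞) → ℝⁿ be absolutely continuous and define Θ(t) = Θ(0) - ∫₀ᵗ [e(τ)ᵀ(T₂(τ) - p₂ sgn(x̃(τ))) + x̃'(τ)ᵀ T₅(τ) - p₃ ρ(‖θ(τ)‖)‖θ(τ)‖‖x̃(τ)‖] dτ with Θ(0) = p₂ Σᵢ|x̃ᵢ(0)| - x̃(0)ᵀT₆(0), where e = x̃' + αx̃, T₆ = T₂ + T₅, ‖T₂‖ ≤ c₁, ‖T₅‖ ≤ c₄, ‖T₆'‖ ≤ c₅ + c₆ρ(‖θ‖)‖θ‖, and sgn acts componentwise. If p₂ > max{c₁ + c₄, c₁ + c₅/α} and p₃ > c₆, then Θ(t) ≥ 0 for all t ≥ 0. -/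

import Mathlib

open MeasureTheory Filter Topology

private lemma mul_sign_eq_abs (x : ℝ) : x * Real.sign x = |x| := by
  rcases lt_trichotomy x 0 with h | h | h
  · rw [Real.sign_of_neg h, abs_of_neg h]; ring
  · simp [h]
  · rw [Real.sign_of_pos h, abs_of_pos h]; ring

private lemma measurable_realSign : Measurable Real.sign := by
  unfold Real.sign
  exact Measurable.ite (measurableSet_lt measurable_id measurable_const) measurable_const
    (Measurable.ite (measurableSet_lt measurable_const measurable_id) measurable_const
      measurable_const)

private lemma abs_realSign_le_one (x : ℝ) : |Real.sign x| ≤ 1 := by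
  rcases Real.sign_apply_eq x with h | h | h <;> simp [h]

private lemma coord_abs_le_norm {n : ℕ} (x : EuclideanSpace ℝ (Fin n)) (i : Fin n) :
    |x i| ≤ ‖x‖ := by
  rw [EuclideanSpace.norm_eq, ← Real.sqrt_sq_eq_abs]
  apply Real.sqrt_le_sqrt
  have := Finset.single_le_sum (f := fun j => ‖x j‖ ^ 2) (fun j _ => sq_nonneg _)
    (Finset.mem_univ i)
  simpa [Real.norm_eq_abs, sq_abs] using this

private lemma norm_le_sum_abs {n : ℕ} (x : EuclideanSpace ℝ (Fin n)) :
    ‖x‖ ≤ ∑ i, |x i| := by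
  rw [EuclideanSpace.norm_eq]
  have h1 : ∑ i, ‖x i‖ ^ 2 ≤ (∑ i, |x i|) ^ 2 := by
    simpa [Real.norm_eq_abs] using
      Finset.sum_sq_le_sq_sum_of_nonneg (f := fun i => |x i|)
        (fun i _ => abs_nonneg (x i))
  calc Real.sqrt (∑ i, ‖x i‖ ^ 2) ≤ Real.sqrt ((∑ i, |x i|) ^ 2) := Real.sqrt_le_sqrt h1
    _ = abs (∑ i, |x i|) := Real.sqrt_sq_eq_abs _
    _ = ∑ i, |x i| := abs_of_nonneg (Finset.sum_nonneg fun i _ => abs_nonneg _)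

private lemma intervalIntegrable_of_bound (f : ℝ → ℝ) (t C : ℝ) (ht : 0 ≤ t)
    (hm : AEStronglyMeasurable f (volume.restrict (Set.uIoc 0 t)))
    (hb : ∀ x ∈ Set.Icc 0 t, ‖f x‖ ≤ C) : IntervalIntegrable f volume 0 t := by
  rw [intervalIntegrable_iff, Set.uIoc_of_le ht] at *
  apply Integrable.mono' (integrableOn_const (C := C) measure_Ioc_lt_top.ne) hm
  filter_upwards [ae_restrict_mem measurableSet_Ioc] with x hx
  exact hb x (Set.Ioc_subset_Icc_self hx)

private lemma sqrt_sq_add_tendsto (a : ℝ) :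
    Tendsto (fun k : ℕ => Real.sqrt (a ^ 2 + (1 / ((k : ℝ) + 1)) ^ 2)) atTop (𝓝 |a|) := by
  have h : Continuous fun y : ℝ => Real.sqrt (a ^ 2 + y ^ 2) := by continuity
  have h2 : Real.sqrt (a ^ 2 + 0 ^ 2) = |a| := by
    simp [Real.sqrt_sq_eq_abs]
  rw [← h2]
  exact (h.tendsto 0).comp tendsto_one_div_add_atTop_nhds_zero_nat

private lemma sign_ftc (f f' : ℝ → ℝ) (hf : ∀ τ, HasDerivAt f (f' τ) τ)
    (hf'c : Continuous f') (t : ℝ) :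
    ∫ τ in (0:ℝ)..t, f' τ * Real.sign (f τ) = |f t| - |f 0| := by
  have hfc : Continuous f := by
    have : Differentiable ℝ f := fun τ => (hf τ).differentiableAt
    exact this.continuous
  set ε : ℕ → ℝ := fun k => 1 / ((k : ℝ) + 1) with hε
  have hεpos : ∀ k : ℕ, 0 < ε k := fun k => by positivity
  set D : ℕ → ℝ → ℝ := fun k τ => f τ ^ 2 + ε k ^ 2 with hD
  have hDpos : ∀ k τ, 0 < D k τ := fun k τ => by
    have := hεpos k; positivity
  have hDe : ∀ k τ, D k τ = f τ ^ 2 + ε k ^ 2 := fun _ _ => rfl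
  set F : ℕ → ℝ → ℝ := fun k τ => f' τ * (f τ / Real.sqrt (D k τ)) with hF
  have hsq : ∀ k τ, Real.sqrt (D k τ) ≠ 0 := fun k τ =>
    ne_of_gt (Real.sqrt_pos.mpr (hDpos k τ))
  have hFd : ∀ k τ, HasDerivAt (fun s => Real.sqrt (D k s)) (F k τ) τ := by
    intro k τ
    have h1 : HasDerivAt (fun s => D k s) (2 * f τ * f' τ) τ := by
      simpa [hD, mul_comm, mul_assoc, mul_left_comm] using
        (((hf τ).pow 2).add_const (ε k ^ 2))
    have h2 := h1.sqrt (ne_of_gt (hDpos k τ))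
    convert h2 using 1
    rw [hF]
    field_simp
  have hFcont : ∀ k, Continuous (F k) := by
    intro k
    exact hf'c.mul (hfc.div (Real.continuous_sqrt.comp (by fun_prop)) (hsq k))
  have hInt : ∀ k, ∫ τ in (0:ℝ)..t, F k τ = Real.sqrt (D k t) - Real.sqrt (D k 0) := fun k =>
    intervalIntegral.integral_eq_sub_of_hasDerivAt (fun τ _ => hFd k τ)
      ((hFcont k).intervalIntegrable 0 t)
  have habs : ∀ (k : ℕ) (x : ℝ), |F k x| ≤ |f' x| := by
    intro k x
    rw [hF, abs_mul]
    have h1 : |f x / Real.sqrt (D k x)| ≤ 1 := by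
      rw [abs_div, abs_of_nonneg (Real.sqrt_nonneg _),
        div_le_one (Real.sqrt_pos.mpr (hDpos k x))]
      calc |f x| = Real.sqrt (f x ^ 2) := (Real.sqrt_sq_eq_abs _).symm
        _ ≤ Real.sqrt (D k x) := Real.sqrt_le_sqrt (by rw [hDe]; nlinarith [sq_nonneg (ε k)])
    calc |f' x| * |f x / Real.sqrt (D k x)| ≤ |f' x| * 1 :=
          mul_le_mul_of_nonneg_left h1 (abs_nonneg _)
      _ = |f' x| := mul_one _
  have hlim : ∀ x : ℝ, Tendsto (fun k => F k x) atTop (𝓝 (f' x * Real.sign (f x))) := by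
    intro x
    rcases eq_or_ne (f x) 0 with h0 | h0
    · have hz : ∀ k, F k x = 0 := fun k => by simp [hF, h0]
      simp only [hz, h0, Real.sign_zero, mul_zero]
      exact tendsto_const_nhds
    · have h1 : Tendsto (fun k : ℕ => Real.sqrt (D k x)) atTop (𝓝 |f x|) :=
        sqrt_sq_add_tendsto (f x)
      have h2 : Tendsto (fun k : ℕ => f x / Real.sqrt (D k x)) atTop (𝓝 (f x / |f x|)) :=
        tendsto_const_nhds.div h1 (abs_ne_zero.mpr h0)
      have h3 : f x / |f x| = Real.sign (f x) := by
        rcases h0.lt_or_gt with h | h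
        · rw [Real.sign_of_neg h, abs_of_neg h]; field_simp
        · rw [Real.sign_of_pos h, abs_of_pos h]; field_simp
      have h4 : Tendsto (fun k : ℕ => f' x * (f x / Real.sqrt (D k x))) atTop
          (𝓝 (f' x * (f x / |f x|))) := (tendsto_const_nhds (x := f' x)).mul h2
      rw [h3] at h4
      exact h4
  have hmain : Tendsto (fun k => ∫ τ in (0:ℝ)..t, F k τ) atTop
      (𝓝 (∫ τ in (0:ℝ)..t, f' τ * Real.sign (f τ))) := by
    apply intervalIntegral.tendsto_integral_filter_of_dominated_convergence
      (fun τ => |f' τ|)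
    · exact Eventually.of_forall fun k => ((hFcont k).aestronglyMeasurable).restrict
    · exact Eventually.of_forall fun k => ae_of_all _ fun x _ => by
        simpa [Real.norm_eq_abs] using habs k x
    · exact hf'c.abs.intervalIntegrable 0 t
    · exact ae_of_all _ fun x _ => hlim x
  have hrhs : Tendsto (fun k => ∫ τ in (0:ℝ)..t, F k τ) atTop (𝓝 (|f t| - |f 0|)) := by
    simp only [hInt]
    exact (sqrt_sq_add_tendsto (f t)).sub (sqrt_sq_add_tendsto (f 0))
  exact tendsto_nhds_unique hmain hrhs
theorem rise_P_function_nonneg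
    {n : ℕ} (xe xe' : ℝ → EuclideanSpace ℝ (Fin n))
    (T₂ T₅ : ℝ → EuclideanSpace ℝ (Fin n))
    (α p₂ p₃ c₁ c₄ c₅ c₆ : ℝ) (ρ : ℝ → ℝ)
    (hα : 0 < α) (hp₂ : 0 < p₂) (hp₃ : 0 < p₃)
    (hρmono : Monotone ρ) (hρpos : ∀ r, 0 ≤ ρ r)
    (hxe : ∀ t, HasDerivAt xe (xe' t) t) (hxe'c : Continuous xe')
    (hT₂c : Continuous T₂) (hT₅c : Continuous T₅)
    (e : ℝ → EuclideanSpace ℝ (Fin n)) (he : ∀ t, e t = xe' t + α • xe t)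
    (θn : ℝ → ℝ) (hθn : ∀ t, θn t = Real.sqrt (‖xe t‖^2 + ‖e t‖^2))
    (T₆ T₆' : ℝ → EuclideanSpace ℝ (Fin n))
    (hT₆ : ∀ t, T₆ t = T₂ t + T₅ t)
    (hT₆d : ∀ t, HasDerivAt T₆ (T₆' t) t)
    (hbT₂ : ∀ t, ‖T₂ t‖ ≤ c₁) (hbT₅ : ∀ t, ‖T₅ t‖ ≤ c₄)
    (hbT₆' : ∀ t, ‖T₆' t‖ ≤ c₅ + c₆ * ρ (θn t) * θn t)
    (hgain₂ : p₂ > max (c₁ + c₄) (c₁ + c₅ / α)) (hgain₃ : p₃ > c₆)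
    (Θ : ℝ → ℝ)
    (hΘ : ∀ t, Θ t = (p₂ * (∑ i, |xe 0 i|) - (inner ℝ (xe 0) (T₆ 0) : ℝ)) -
      ∫ τ in (0:ℝ)..t,
        ((inner ℝ (e τ) (T₂ τ - p₂ • (show EuclideanSpace ℝ (Fin n) from WithLp.toLp 2 fun i => Real.sign (xe τ i))) : ℝ)
          + (inner ℝ (xe' τ) (T₅ τ) : ℝ)
          - p₃ * ρ (θn τ) * θn τ * ‖xe τ‖)) :
    ∀ t, 0 ≤ t → 0 ≤ Θ t := by
  intro t ht
  -- continuity facts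
  have hxed : Differentiable ℝ xe := fun τ => (hxe τ).differentiableAt
  have hxec : Continuous xe := hxed.continuous
  have hT₆dd : Differentiable ℝ T₆ := fun τ => (hT₆d τ).differentiableAt
  have hT₆c : Continuous T₆ := hT₆dd.continuous
  have hec : Continuous e := by
    have h : e = fun τ => xe' τ + α • xe τ := funext he
    rw [h]; exact hxe'c.add (hxec.const_smul α)
  have hθc : Continuous θn := by
    have h : θn = fun τ => Real.sqrt (‖xe τ‖^2 + ‖e τ‖^2) := funext hθn
    rw [h]; fun_prop
  have hθ0 : ∀ τ, 0 ≤ θn τ := fun τ => by rw [hθn]; exact Real.sqrt_nonneg _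
  have hρθ0 : ∀ τ, 0 ≤ ρ (θn τ) * θn τ := fun τ => mul_nonneg (hρpos _) (hθ0 τ)
  -- coordinate derivatives / continuity
  have hcoordd : ∀ (i : Fin n) (τ : ℝ), HasDerivAt (fun s => xe s i) (xe' τ i) τ := by
    intro i τ
    exact ((EuclideanSpace.proj i (𝕜 := ℝ)).hasFDerivAt.comp_hasDerivAt τ (hxe τ))
  have hcoordc : ∀ i : Fin n, Continuous fun τ => xe' τ i := fun i =>
    (EuclideanSpace.proj i (𝕜 := ℝ)).continuous.comp hxe'c
  have hcoordc' : ∀ i : Fin n, Continuous fun τ => xe τ i := fun i =>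
    (EuclideanSpace.proj i (𝕜 := ℝ)).continuous.comp hxec
  -- constants
  have hc₁ : 0 ≤ c₁ := le_trans (norm_nonneg _) (hbT₂ 0)
  have hc₄ : 0 ≤ c₄ := le_trans (norm_nonneg _) (hbT₅ 0)
  obtain ⟨hg₁, hg₂⟩ := max_lt_iff.mp hgain₂
  have hg₂' : α * c₁ + c₅ < α * p₂ := by
    have h := mul_lt_mul_of_pos_left hg₂ hα
    rw [mul_add, mul_div_cancel₀ _ (ne_of_gt hα)] at h
    linarith
  -- bounds on the compact interval
  obtain ⟨Mx, hMx⟩ := isCompact_Icc.exists_bound_of_continuousOn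
    (hxec.continuousOn : ContinuousOn xe (Set.Icc 0 t))
  obtain ⟨Mx', hMx'⟩ := isCompact_Icc.exists_bound_of_continuousOn
    (hxe'c.continuousOn : ContinuousOn xe' (Set.Icc 0 t))
  obtain ⟨Mθ, hMθ⟩ := isCompact_Icc.exists_bound_of_continuousOn
    (hθc.continuousOn : ContinuousOn θn (Set.Icc 0 t))
  have hθM : ∀ τ ∈ Set.Icc (0:ℝ) t, θn τ ≤ Mθ := fun τ hτ =>
    le_trans (le_abs_self _) (hMθ τ hτ)
  have hρθM : ∀ τ ∈ Set.Icc (0:ℝ) t, ρ (θn τ) * θn τ ≤ ρ Mθ * Mθ := by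
    intro τ hτ
    exact mul_le_mul (hρmono (hθM τ hτ)) (hθM τ hτ) (hθ0 τ) (hρpos Mθ)
  -- measurability of T₆'
  have hT₆'m : StronglyMeasurable T₆' := by
    have h : T₆' = deriv T₆ := funext fun τ => ((hT₆d τ).deriv).symm
    rw [h]; exact stronglyMeasurable_deriv T₆
  have hT₆'b : ∀ τ ∈ Set.Icc (0:ℝ) t, ‖T₆' τ‖ ≤ c₅ + |c₆| * (ρ Mθ * Mθ) := by
    intro τ hτ
    refine le_trans (hbT₆' τ) ?_
    have h1 : c₆ * ρ (θn τ) * θn τ ≤ |c₆| * (ρ Mθ * Mθ) := by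
      calc c₆ * ρ (θn τ) * θn τ = c₆ * (ρ (θn τ) * θn τ) := by ring
        _ ≤ |c₆| * (ρ (θn τ) * θn τ) := mul_le_mul_of_nonneg_right (le_abs_self c₆) (hρθ0 τ)
        _ ≤ |c₆| * (ρ Mθ * Mθ) := mul_le_mul_of_nonneg_left (hρθM τ hτ) (abs_nonneg c₆)
    linarith
  -- named functions
  set ψ : ℝ → ℝ := fun τ => ∑ i, |xe τ i| with hψ
  set S : ℝ → ℝ := fun τ => ∑ i, xe' τ i * Real.sign (xe τ i) with hS
  set φ' : ℝ → ℝ := fun τ => (inner ℝ (xe τ) (T₆' τ) : ℝ) + (inner ℝ (xe' τ) (T₆ τ) : ℝ) with hφ'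
  set R : ℝ → ℝ := fun τ => -(inner ℝ (xe τ) (T₆' τ) : ℝ) + α * (inner ℝ (xe τ) (T₂ τ) : ℝ)
    - α * p₂ * ψ τ - p₃ * ρ (θn τ) * θn τ * ‖xe τ‖ with hR
  have hψc : Continuous ψ := continuous_finset_sum _ fun i _ => (hcoordc' i).abs
  have hψ0 : ∀ τ, 0 ≤ ψ τ := fun τ => Finset.sum_nonneg fun i _ => abs_nonneg _
  have hφd : ∀ τ, HasDerivAt (fun s => (inner ℝ (xe s) (T₆ s) : ℝ)) (φ' τ) τ := fun τ =>
    (hxe τ).inner ℝ (hT₆d τ)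
  -- integrability
  have hIinner : IntervalIntegrable (fun τ => (inner ℝ (xe τ) (T₆' τ) : ℝ)) volume 0 t := by
    apply intervalIntegrable_of_bound _ t (Mx * (c₅ + |c₆| * (ρ Mθ * Mθ))) ht
    · exact ((hxec.measurable.inner hT₆'m.measurable).aestronglyMeasurable).restrict
    · intro x hx
      rw [Real.norm_eq_abs]
      calc |(inner ℝ (xe x) (T₆' x) : ℝ)| ≤ ‖xe x‖ * ‖T₆' x‖ := abs_real_inner_le_norm _ _
        _ ≤ Mx * (c₅ + |c₆| * (ρ Mθ * Mθ)) := by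
            apply mul_le_mul (hMx x hx) (hT₆'b x hx) (norm_nonneg _)
            exact le_trans (norm_nonneg _) (hMx x hx)
  have hsi : ∀ i : Fin n, IntervalIntegrable
      (fun τ => xe' τ i * Real.sign (xe τ i)) volume 0 t := by
    intro i
    apply intervalIntegrable_of_bound _ t Mx' ht
    · exact (((hcoordc i).aestronglyMeasurable).mul
        ((measurable_realSign.comp (hcoordc' i).measurable).aestronglyMeasurable)).restrict
    · intro x hx
      rw [Real.norm_eq_abs, abs_mul]
      calc |xe' x i| * |Real.sign (xe x i)| ≤ ‖xe' x‖ * 1 :=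
            mul_le_mul (coord_abs_le_norm _ i) (abs_realSign_le_one _) (abs_nonneg _)
              (norm_nonneg _)
        _ = ‖xe' x‖ := mul_one _
        _ ≤ Mx' := hMx' x hx
  have hISint : IntervalIntegrable S volume 0 t := by
    have hfe : S = ∑ i : Fin n, (fun τ => xe' τ i * Real.sign (xe τ i)) := by
      funext τ
      rw [hS]
      simp [Finset.sum_apply]
    rw [hfe]
    exact IntervalIntegrable.sum Finset.univ fun i _ => hsi i
  have hIT2 : IntervalIntegrable (fun τ => α * (inner ℝ (xe τ) (T₂ τ) : ℝ)) volume 0 t :=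
    (continuous_const.mul (hxec.inner hT₂c)).intervalIntegrable 0 t
  have hIρ : IntervalIntegrable (fun τ => p₃ * ρ (θn τ) * θn τ * ‖xe τ‖) volume 0 t := by
    apply intervalIntegrable_of_bound _ t (p₃ * (ρ Mθ * Mθ) * Mx) ht
    · exact ((((measurable_const.mul (hρmono.measurable.comp hθc.measurable)).mul
        hθc.measurable).mul hxec.norm.measurable).aestronglyMeasurable).restrict
    · intro x hx
      rw [Real.norm_eq_abs]
      have h1 : 0 ≤ ρ (θn x) * θn x := hρθ0 x
      have h2 := hρθM x hx
      have h3 := hMx x hx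
      have h4 : 0 ≤ ‖xe x‖ := norm_nonneg _
      have h5 : 0 ≤ ρ Mθ * Mθ := le_trans h1 h2
      have h0 : 0 ≤ p₃ * ρ (θn x) * θn x * ‖xe x‖ :=
        mul_nonneg (mul_nonneg (mul_nonneg hp₃.le (hρpos _)) (hθ0 x)) (norm_nonneg _)
      rw [abs_of_nonneg h0]
      calc p₃ * ρ (θn x) * θn x * ‖xe x‖ = p₃ * (ρ (θn x) * θn x) * ‖xe x‖ := by ring
        _ ≤ p₃ * (ρ Mθ * Mθ) * Mx := by
            apply mul_le_mul (mul_le_mul_of_nonneg_left h2 hp₃.le) h3 h4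
            exact mul_nonneg hp₃.le h5
  have hIφ' : IntervalIntegrable φ' volume 0 t :=
    hIinner.add ((hxe'c.inner hT₆c).intervalIntegrable 0 t)
  have hIR : IntervalIntegrable R volume 0 t :=
    ((hIinner.neg.add hIT2).sub ((hψc.intervalIntegrable 0 t).const_mul (α * p₂))).sub hIρ
  -- pointwise identity for the integrand
  have hEq : Set.EqOn
      (fun τ => ((inner ℝ (e τ) (T₂ τ - p₂ • (show EuclideanSpace ℝ (Fin n) from WithLp.toLp 2 fun i => Real.sign (xe τ i))) : ℝ)
          + (inner ℝ (xe' τ) (T₅ τ) : ℝ)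
          - p₃ * ρ (θn τ) * θn τ * ‖xe τ‖))
      (fun τ => φ' τ - p₂ * S τ + R τ) (Set.uIcc 0 t) := by
    intro τ _
    simp only
    have hA : (inner ℝ (xe' τ) (show EuclideanSpace ℝ (Fin n) from WithLp.toLp 2 fun i => Real.sign (xe τ i)) : ℝ) = S τ := by
      rw [hS]
      simp [PiLp.inner_apply, RCLike.inner_apply, conj_trivial]
      exact Finset.sum_congr rfl fun i _ => mul_comm _ _
    have hB : (inner ℝ (xe τ) (show EuclideanSpace ℝ (Fin n) from WithLp.toLp 2 fun i => Real.sign (xe τ i)) : ℝ) = ψ τ := by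
      rw [hψ]
      simp [PiLp.inner_apply, RCLike.inner_apply, conj_trivial, mul_sign_eq_abs]
      exact Finset.sum_congr rfl fun i _ => by rw [mul_comm, mul_sign_eq_abs]
    have h1 : (inner ℝ (e τ) (T₂ τ - p₂ • (show EuclideanSpace ℝ (Fin n) from WithLp.toLp 2 fun i => Real.sign (xe τ i))) : ℝ)
        = (inner ℝ (xe' τ) (T₂ τ) : ℝ) + α * (inner ℝ (xe τ) (T₂ τ) : ℝ)
          - p₂ * (S τ + α * ψ τ) := by
      rw [he τ, inner_sub_right, inner_add_left, real_inner_smul_left,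
        real_inner_smul_right, inner_add_left, real_inner_smul_left, hA, hB]
    have h2 : (inner ℝ (xe' τ) (T₂ τ) : ℝ) + (inner ℝ (xe' τ) (T₅ τ) : ℝ)
        = (inner ℝ (xe' τ) (T₆ τ) : ℝ) := by
      rw [hT₆ τ, inner_add_right]
    rw [h1, hφ', hR]
    linear_combination h2
  -- FTC computations
  have h1 : ∫ τ in (0:ℝ)..t, φ' τ
      = (inner ℝ (xe t) (T₆ t) : ℝ) - (inner ℝ (xe 0) (T₆ 0) : ℝ) :=
    intervalIntegral.integral_eq_sub_of_hasDerivAt (fun τ _ => hφd τ) hIφ'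
  have h2 : ∫ τ in (0:ℝ)..t, S τ = ψ t - ψ 0 := by
    rw [hS]
    rw [intervalIntegral.integral_finset_sum (fun i _ => hsi i)]
    have h3 : ∀ i : Fin n,
        (∫ τ in (0:ℝ)..t, xe' τ i * Real.sign (xe τ i)) = |xe t i| - |xe 0 i| := fun i =>
      sign_ftc (fun τ => xe τ i) (fun τ => xe' τ i) (hcoordd i) (hcoordc i) t
    simp only [h3]
    rw [Finset.sum_sub_distrib]
  -- R is nonpositive on [0, t]
  have hRnonpos : ∀ τ ∈ Set.Icc (0:ℝ) t, R τ ≤ (fun _ => (0:ℝ)) τ := by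
    intro τ _
    simp only
    have hx1 : -(inner ℝ (xe τ) (T₆' τ) : ℝ) ≤ ‖xe τ‖ * (c₅ + c₆ * ρ (θn τ) * θn τ) := by
      have ha := abs_real_inner_le_norm (xe τ) (T₆' τ)
      have hb := mul_le_mul_of_nonneg_left (hbT₆' τ) (norm_nonneg (xe τ))
      have hc := neg_abs_le (inner ℝ (xe τ) (T₆' τ) : ℝ)
      nlinarith
    have hx2 : α * (inner ℝ (xe τ) (T₂ τ) : ℝ) ≤ α * (‖xe τ‖ * c₁) := by
      apply mul_le_mul_of_nonneg_left _ hα.le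
      exact le_trans (real_inner_le_norm _ _)
        (mul_le_mul_of_nonneg_left (hbT₂ τ) (norm_nonneg _))
    have hx3 : ‖xe τ‖ ≤ ψ τ := norm_le_sum_abs _
    have hx4 : 0 ≤ ψ τ := hψ0 τ
    have hx5 : (c₆ - p₃) * (ρ (θn τ) * θn τ * ‖xe τ‖) ≤ 0 :=
      mul_nonpos_of_nonpos_of_nonneg (by linarith) (mul_nonneg (hρθ0 τ) (norm_nonneg _))
    rw [hR]
    simp only
    rcases le_or_gt 0 (c₅ + α * c₁) with hcs | hcs
    · have hx6 : (c₅ + α * c₁) * ‖xe τ‖ ≤ (c₅ + α * c₁) * ψ τ :=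
        mul_le_mul_of_nonneg_left hx3 hcs
      have hx7 : (α * c₁ + c₅) * ψ τ ≤ (α * p₂) * ψ τ :=
        mul_le_mul_of_nonneg_right hg₂'.le hx4
      nlinarith
    · have hx6 : (c₅ + α * c₁) * ‖xe τ‖ ≤ 0 :=
        mul_nonpos_of_nonpos_of_nonneg hcs.le (norm_nonneg _)
      have hx7 : 0 ≤ (α * p₂) * ψ τ :=
        mul_nonneg (mul_nonneg hα.le hp₂.le) hx4
      nlinarith
  have hRle : (∫ τ in (0:ℝ)..t, R τ) ≤ 0 := by
    calc (∫ τ in (0:ℝ)..t, R τ) ≤ ∫ τ in (0:ℝ)..t, (fun _ => (0:ℝ)) τ :=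
          intervalIntegral.integral_mono_on ht hIR intervalIntegrable_const hRnonpos
      _ = 0 := by simp
  -- boundary estimate
  have hbound : (inner ℝ (xe t) (T₆ t) : ℝ) ≤ p₂ * ψ t := by
    have hb1 : ‖T₆ t‖ ≤ c₁ + c₄ := by
      rw [hT₆ t]
      exact le_trans (norm_add_le _ _) (add_le_add (hbT₂ t) (hbT₅ t))
    calc (inner ℝ (xe t) (T₆ t) : ℝ) ≤ ‖xe t‖ * ‖T₆ t‖ := real_inner_le_norm _ _
      _ ≤ ψ t * (c₁ + c₄) := by
          apply mul_le_mul (norm_le_sum_abs _) hb1 (norm_nonneg _) (hψ0 t)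
      _ ≤ ψ t * p₂ := mul_le_mul_of_nonneg_left hg₁.le (hψ0 t)
      _ = p₂ * ψ t := mul_comm _ _
  -- put it together
  rw [hΘ t, intervalIntegral.integral_congr hEq]
  have hsplit : ∫ τ in (0:ℝ)..t, (φ' τ - p₂ * S τ + R τ)
      = ((inner ℝ (xe t) (T₆ t) : ℝ) - (inner ℝ (xe 0) (T₆ 0) : ℝ))
        - p₂ * (ψ t - ψ 0) + ∫ τ in (0:ℝ)..t, R τ := by
    rw [intervalIntegral.integral_add (hIφ'.sub (hISint.const_mul p₂)) hIR,
      intervalIntegral.integral_sub hIφ' (hISint.const_mul p₂),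
      intervalIntegral.integral_const_mul, h1, h2]
  rw [hsplit]
  have hψ0e : ψ 0 = ∑ i, |xe 0 i| := rfl
  linarith
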